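/- Let (φ_k)_{k≥0} be a sequence of continuously differentiable functions φ_k : ℝ → ℝ with φ_0 ≡ 1, sup_x |φ_k(x)| ≤ 1 for all k, and let (q_k)_{k≥0} be real numbers with q_0 = 1, q_k ≥ 1, and q_k ≥ (sup_x |φ_k'(x)|)² for all k. For a finite Borel measure μ on ℝ define ‖μ‖ := (Σ_{k=0}^∞ 2^{−k} q_k^{−1} (∫_ℝ φ_k dμ)²)^{1/2}. Then for every real p ≥ 1, one has 2p · ‖μ‖^{2p−2} · Σ_{k=0}^∞ 2^{−k} q_k^{−1} (∫_ℝ φ_k dμ)(∫_ℝ φ_k' dμ) ≤ 4p · (1 + ‖μ‖^{2p}). -/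

import Mathlib

open MeasureTheory

/-- The estimate `∫ ∂_x (δψ/δμ)(μ,x) μ(dx) ≤ 4p · ψ(μ)` for `ψ(μ) = 1 + ‖μ‖^{2p}`
from the comparison theorem of Section 5, where
`‖μ‖ := (Σ_k 2^{-k} q_k^{-1} (∫ φ_k dμ)²)^{1/2}`. -/
theorem derivative_estimate_for_psi
    (φ : ℕ → ℝ → ℝ) (q : ℕ → ℝ)
    (hφdiff : ∀ k, ContDiff ℝ 1 (φ k))
    (hφ0 : ∀ x : ℝ, φ 0 x = 1)
    (hφbd : ∀ k, ∀ x : ℝ, |φ k x| ≤ 1)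
    (hq0 : q 0 = 1)
    (hq1 : ∀ k, 1 ≤ q k)
    (hq2 : ∀ k, ∀ x : ℝ, (deriv (φ k) x) ^ 2 ≤ q k)
    (μ : Measure ℝ) [IsFiniteMeasure μ]
    (p : ℝ) (hp : 1 ≤ p) :
    2 * p
        * Real.sqrt (∑' k : ℕ, (1 / 2 ^ k) * (q k)⁻¹ * (∫ x, φ k x ∂μ) ^ 2)
            ^ (2 * p - 2)
        * (∑' k : ℕ,
            (1 / 2 ^ k) * (q k)⁻¹ * (∫ x, φ k x ∂μ) * (∫ x, deriv (φ k) x ∂μ))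
      ≤ 4 * p
          * (1 + Real.sqrt (∑' k : ℕ, (1 / 2 ^ k) * (q k)⁻¹ * (∫ x, φ k x ∂μ) ^ 2)
                ^ (2 * p)) := by
  have hp0 : (0:ℝ) < p := lt_of_lt_of_le one_pos hp
  have hc2 : ∀ k : ℕ, (0:ℝ) < 1 / 2 ^ k := by intro k; positivity
  have hq0' : ∀ k, (0:ℝ) < q k := fun k => lt_of_lt_of_le one_pos (hq1 k)
  have hqinv : ∀ k, (0:ℝ) < (q k)⁻¹ := fun k => inv_pos.2 (hq0' k)
  have hqinv1 : ∀ k, (q k)⁻¹ ≤ 1 := fun k => inv_le_one_of_one_le₀ (hq1 k)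
  set m : ℝ := (μ Set.univ).toReal with hm_def
  have hm0 : 0 ≤ m := ENNReal.toReal_nonneg
  -- bounds on the integrals
  have ha_le : ∀ k, |∫ x, φ k x ∂μ| ≤ m := by
    intro k
    have h := norm_integral_le_of_norm_le_const (μ := μ) (f := φ k) (C := 1)
      (Filter.Eventually.of_forall (fun x => by simpa using hφbd k x))
    simpa [Real.norm_eq_abs, hm_def, Measure.real] using h
  have hb_le : ∀ k, |∫ x, deriv (φ k) x ∂μ| ≤ Real.sqrt (q k) * m := by
    intro k
    have hd : ∀ x : ℝ, |deriv (φ k) x| ≤ Real.sqrt (q k) := by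
      intro x
      have h := Real.sqrt_le_sqrt (hq2 k x)
      rwa [Real.sqrt_sq_eq_abs] at h
    have h := norm_integral_le_of_norm_le_const (μ := μ)
      (f := fun x => deriv (φ k) x) (C := Real.sqrt (q k))
      (Filter.Eventually.of_forall (fun x => by simpa using hd x))
    simpa [Real.norm_eq_abs, hm_def, Measure.real] using h
  have ha2 : ∀ k, (∫ x, φ k x ∂μ) ^ 2 ≤ m ^ 2 := by
    intro k
    have h := pow_le_pow_left₀ (abs_nonneg _) (ha_le k) 2
    rwa [sq_abs] at h
  have hb2 : ∀ k, (∫ x, deriv (φ k) x ∂μ) ^ 2 ≤ q k * m ^ 2 := by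
    intro k
    have h := pow_le_pow_left₀ (abs_nonneg _) (hb_le k) 2
    rw [sq_abs, mul_pow, Real.sq_sqrt (hq0' k).le] at h
    exact h
  have hqm : ∀ k, (q k)⁻¹ * (∫ x, deriv (φ k) x ∂μ) ^ 2 ≤ m ^ 2 := by
    intro k
    have h := mul_le_mul_of_nonneg_left (hb2 k) (hqinv k).le
    rwa [← mul_assoc, inv_mul_cancel₀ (hq0' k).ne', one_mul] at h
  have hqa : ∀ k, (q k)⁻¹ * (∫ x, φ k x ∂μ) ^ 2 ≤ m ^ 2 := by
    intro k
    nlinarith [hqinv1 k, sq_nonneg (∫ x, φ k x ∂μ), ha2 k, (hqinv k).le]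
  -- summability
  have hgeo : Summable (fun k : ℕ => (1 / 2 ^ k : ℝ) * m ^ 2) := by
    have h : Summable (fun k : ℕ => (1 / 2 : ℝ) ^ k) := summable_geometric_two
    simpa [one_div, inv_pow] using h.mul_right (m ^ 2)
  have hSsum : Summable (fun k : ℕ =>
      (1 / 2 ^ k : ℝ) * (q k)⁻¹ * (∫ x, φ k x ∂μ) ^ 2) := by
    refine hgeo.of_nonneg_of_le (fun k => mul_nonneg (mul_nonneg (hc2 k).le (hqinv k).le) (sq_nonneg _)) (fun k => ?_)
    have h := mul_le_mul_of_nonneg_left (hqa k) (hc2 k).le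
    calc (1 / 2 ^ k : ℝ) * (q k)⁻¹ * (∫ x, φ k x ∂μ) ^ 2
        = (1 / 2 ^ k : ℝ) * ((q k)⁻¹ * (∫ x, φ k x ∂μ) ^ 2) := by ring
      _ ≤ (1 / 2 ^ k : ℝ) * m ^ 2 := h
  have hTsum : Summable (fun k : ℕ =>
      (1 / 2 ^ k : ℝ) * (q k)⁻¹ * (∫ x, φ k x ∂μ) * (∫ x, deriv (φ k) x ∂μ)) := by
    refine Summable.of_norm_bounded hgeo (fun k => ?_)
    have h3 := two_mul_le_add_sq (|∫ x, φ k x ∂μ|) (|∫ x, deriv (φ k) x ∂μ|)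
    rw [sq_abs, sq_abs] at h3
    have h4 : (q k)⁻¹ * (|∫ x, φ k x ∂μ| * |∫ x, deriv (φ k) x ∂μ|) ≤ m ^ 2 := by
      nlinarith [mul_le_mul_of_nonneg_left h3 (hqinv k).le, hqa k, hqm k]
    calc ‖(1 / 2 ^ k : ℝ) * (q k)⁻¹ * (∫ x, φ k x ∂μ) * (∫ x, deriv (φ k) x ∂μ)‖
        = (1 / 2 ^ k : ℝ) * ((q k)⁻¹ * (|∫ x, φ k x ∂μ| * |∫ x, deriv (φ k) x ∂μ|)) := by
          rw [Real.norm_eq_abs, abs_mul, abs_mul, abs_mul,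
            abs_of_pos (hc2 k), abs_of_pos (hqinv k)]
          ring
      _ ≤ (1 / 2 ^ k : ℝ) * m ^ 2 := mul_le_mul_of_nonneg_left h4 (hc2 k).le
  -- termwise key inequality
  have key : ∀ k : ℕ,
      (1 / 2 ^ k : ℝ) * (q k)⁻¹ * (∫ x, φ k x ∂μ) * (∫ x, deriv (φ k) x ∂μ)
        ≤ ((1 / 2 ^ k : ℝ) * (q k)⁻¹ * (∫ x, φ k x ∂μ) ^ 2) / 2
          + ((1 / 2 ^ k : ℝ) * m ^ 2) / 2 := by
    intro k
    have k1 := mul_le_mul_of_nonneg_left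
      (two_mul_le_add_sq (∫ x, φ k x ∂μ) (∫ x, deriv (φ k) x ∂μ))
      (mul_pos (hc2 k) (hqinv k)).le
    have k2 := mul_le_mul_of_nonneg_left (hqm k) (hc2 k).le
    nlinarith [k1, k2]
  have hsum_geo : ∑' k : ℕ, (1 / 2 ^ k : ℝ) = 2 := by
    have h := tsum_geometric_two
    simpa [one_div, inv_pow] using h
  have hT_le :
      (∑' k : ℕ, (1 / 2 ^ k : ℝ) * (q k)⁻¹ * (∫ x, φ k x ∂μ) * (∫ x, deriv (φ k) x ∂μ))
        ≤ (∑' k : ℕ, (1 / 2 ^ k : ℝ) * (q k)⁻¹ * (∫ x, φ k x ∂μ) ^ 2) / 2 + m ^ 2 := by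
    have h1 := Summable.tsum_le_tsum key hTsum ((hSsum.div_const 2).add (hgeo.div_const 2))
    rw [Summable.tsum_add (hSsum.div_const 2) (hgeo.div_const 2), tsum_div_const, tsum_div_const,
      tsum_mul_right, hsum_geo] at h1
    linarith
  have hm2_le : m ^ 2 ≤ ∑' k : ℕ, (1 / 2 ^ k : ℝ) * (q k)⁻¹ * (∫ x, φ k x ∂μ) ^ 2 := by
    have ha0 : (∫ x, φ 0 x ∂μ) = m := by
      simp [hφ0, hm_def, Measure.real]
    calc m ^ 2 = (1 / 2 ^ 0 : ℝ) * (q 0)⁻¹ * (∫ x, φ 0 x ∂μ) ^ 2 := by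
          rw [ha0, hq0]; norm_num
      _ ≤ _ := Summable.le_tsum hSsum 0
          (fun k _ => mul_nonneg (mul_nonneg (hc2 k).le (hqinv k).le) (sq_nonneg _))
  set S := ∑' k : ℕ, (1 / 2 ^ k : ℝ) * (q k)⁻¹ * (∫ x, φ k x ∂μ) ^ 2 with hS_def
  set T := ∑' k : ℕ,
      (1 / 2 ^ k : ℝ) * (q k)⁻¹ * (∫ x, φ k x ∂μ) * (∫ x, deriv (φ k) x ∂μ) with hT_def
  have hS0 : 0 ≤ S := tsum_nonneg (fun k => mul_nonneg (mul_nonneg (hc2 k).le (hqinv k).le) (sq_nonneg _))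
  set N := Real.sqrt S with hN_def
  have hN0 : 0 ≤ N := Real.sqrt_nonneg _
  have hNS : N ^ 2 = S := Real.sq_sqrt hS0
  have hT32 : T ≤ (3 / 2) * S := by linarith
  have hpow : N ^ (2 * p - 2) * S = N ^ (2 * p) := by
    rw [← hNS, ← Real.rpow_natCast N 2, ← Real.rpow_add' hN0 (by push_cast; linarith)]
    congr 1
    push_cast
    ring
  have hrp : 0 ≤ N ^ (2 * p - 2) := Real.rpow_nonneg hN0 _
  have hrp2 : 0 ≤ N ^ (2 * p) := Real.rpow_nonneg hN0 _
  calc 2 * p * N ^ (2 * p - 2) * T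
      ≤ 2 * p * N ^ (2 * p - 2) * ((3 / 2) * S) :=
        mul_le_mul_of_nonneg_left hT32 (by positivity)
    _ = 3 * p * (N ^ (2 * p - 2) * S) := by ring
    _ = 3 * p * N ^ (2 * p) := by rw [hpow]
    _ ≤ 4 * p * (1 + N ^ (2 * p)) := by nlinarith
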